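/- arXiv:2212.04743 — 4 statements merged into one kernel-verified Lean document; each statement's English description precedes it below -/
import Mathlib

section
/- Let Σ be a root system, α a root, and λ a root with α + λ ∈ Σ. Then the span of the set of brackets [X, Y] with X ∈ g_α and Y ∈ g_λ equals g_{α+λ}; i.e., in a real semisimple Lie algebra with restricted root space decomposition, [g_α, g_λ] = g_{α+λ} whenever α, λ, α+λ are all roots. -/
/-- The restricted root space of a linear functional `l` relative to the
abelian subspace `a` of a real Lie algebra:
`g_l = {X | [H, X] = l(H) • X for all H ∈ a}`. -/
def rootSpaceIn {g : Type*} [LieRing g] [LieAlgebra ℝ g] (a : Submodule ℝ g)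
    (l : g →ₗ[ℝ] ℝ) : Submodule ℝ g where
  carrier := {X | ∀ H ∈ a, ⁅H, X⁆ = l H • X}
  add_mem' := by
    intro x y hx hy H hH
    simp only [Set.mem_setOf_eq] at hx hy
    rw [lie_add, hx H hH, hy H hH, smul_add]
  zero_mem' := by intro H hH; simp
  smul_mem' := by
    intro c x hx H hH
    simp only [Set.mem_setOf_eq] at hx
    rw [lie_smul, hx H hH, smul_comm]

section Aux

variable {g : Type*} [LieRing g] [LieAlgebra ℝ g]

lemma mem_rootSpaceIn {a : Submodule ℝ g} {l : g →ₗ[ℝ] ℝ} {X : g} :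
    X ∈ rootSpaceIn a l ↔ ∀ H ∈ a, ⁅H, X⁆ = l H • X := Iff.rfl

lemma rootSpaceIn_bracket {a : Submodule ℝ g} {α β : g →ₗ[ℝ] ℝ} {x y : g}
    (hx : x ∈ rootSpaceIn a α) (hy : y ∈ rootSpaceIn a β) :
    ⁅x, y⁆ ∈ rootSpaceIn a (α + β) := by
  intro H hH
  rw [leibniz_lie, hx H hH, hy H hH, smul_lie, lie_smul, LinearMap.add_apply, add_smul]

lemma theta_rootSpaceIn (θ : g →ₗ⁅ℝ⁆ g) (hθ2 : ∀ x, θ (θ x) = x)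
    {a : Submodule ℝ g} (haθ : ∀ H ∈ a, θ H = -H)
    {β : g →ₗ[ℝ] ℝ} {X : g} (hX : X ∈ rootSpaceIn a β) :
    θ X ∈ rootSpaceIn a (-β) := by
  intro H hH
  have h1 : θ (-H) = H := by rw [map_neg, haθ H hH, neg_neg]
  calc ⁅H, θ X⁆ = ⁅θ (-H), θ X⁆ := by rw [h1]
    _ = θ ⁅-H, X⁆ := (θ.map_lie _ _).symm
    _ = θ (β (-H) • X) := by rw [hX (-H) (neg_mem hH)]
    _ = (-β) H • θ X := by rw [map_smul]; simp
  done

lemma sl2_nonneg [FiniteDimensional ℝ g]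
    {E F H Z : g} (hH0 : H ≠ 0) (hEF : ⁅E, F⁆ = H) (hHE : ⁅H, E⁆ = (2 : ℝ) • E)
    (hHF : ⁅H, F⁆ = -((2 : ℝ) • F)) {c : ℝ} (hHZ : ⁅H, Z⁆ = c • Z) (hEZ : ⁅E, Z⁆ = 0)
    (hZ0 : Z ≠ 0) : 0 ≤ c := by
  have t : IsSl2Triple H E F := by
    refine ⟨hH0, hEF, ?_, ?_⟩
    · rw [hHE, two_smul]; exact (two_smul ℕ E).symm
    · rw [hHF, two_smul]; rw [two_smul ℕ F]
  have P : t.HasPrimitiveVectorWith Z c := ⟨hZ0, hHZ, hEZ⟩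
  obtain ⟨n, hn⟩ := P.exists_nat
  rw [hn]
  positivity

lemma keyIneq [FiniteDimensional ℝ g]
    (θ : g →ₗ⁅ℝ⁆ g) (hθ2 : ∀ x, θ (θ x) = x)
    (hθpos : ∀ x : g, x ≠ 0 → 0 < -(killingForm ℝ g x (θ x)))
    (a : Submodule ℝ g) (haθ : ∀ H ∈ a, θ H = -H)
    (hamax : ∀ x : g, θ x = -x → (∀ H ∈ a, ⁅H, x⁆ = (0 : g)) → x ∈ a)
    (μ ν : g →ₗ[ℝ] ℝ) (hμ : ∃ H ∈ a, μ H ≠ 0)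
    {X : g} (hX : X ∈ rootSpaceIn a μ) (hX0 : X ≠ 0)
    {Z : g} (hZ : Z ∈ rootSpaceIn a ν) (hZ0 : Z ≠ 0) (hkill : ⁅θ X, Z⁆ = 0) :
    ∃ p ∈ a, (∀ H ∈ a, killingForm ℝ g p H = -μ H) ∧ 0 ≤ ν p := by
  set K := killingForm ℝ g with hK
  set h : g := ⁅X, θ X⁆ with hh
  set c : ℝ := -(K X (θ X)) with hc
  have hcpos : 0 < c := hθpos X hX0
  have hθX : θ X ∈ rootSpaceIn a (-μ) := theta_rootSpaceIn θ hθ2 haθ hX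
  -- h ∈ a
  have hha : h ∈ a := by
    apply hamax
    · rw [hh, θ.map_lie, hθ2, ← lie_skew]
    · intro H hH
      rw [hh, leibniz_lie, hX H hH, hθX H hH, smul_lie, lie_smul]
      simp only [LinearMap.neg_apply, neg_smul]
      abel
  -- Killing pairing of h with a
  have hKh : ∀ H ∈ a, K h H = -(c * μ H) := by
    intro H hH
    have h1 : ⁅θ X, H⁆ = μ H • θ X := by
      rw [← lie_skew, hθX H hH]
      simp only [LinearMap.neg_apply, neg_smul, neg_neg]
    calc K h H = K X ⁅θ X, H⁆ := LieModule.traceForm_apply_lie_apply ℝ g g X (θ X) H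
      _ = μ H * K X (θ X) := by rw [h1, map_smul]; simp [smul_eq_mul]
      _ = -(c * μ H) := by rw [hc]; ring
  have hh0 : h ≠ 0 := by
    obtain ⟨H₀, hH₀, hm⟩ := hμ
    intro h0
    have := hKh H₀ hH₀
    rw [h0, map_zero] at this
    simp only [LinearMap.zero_apply] at this
    have : c * μ H₀ = 0 := by linarith
    rcases mul_eq_zero.mp this with h' | h'
    · exact absurd h' (ne_of_gt hcpos)
    · exact hm h'
  have hKhh : 0 < K h h := by
    have := hθpos h hh0
    rwa [haθ h hha, map_neg, neg_neg] at this
  have hμh : μ h < 0 := by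
    have h1 := hKh h hha
    have h2 : c * μ h < 0 := by linarith
    by_contra hge
    push_neg at hge
    have := mul_nonneg hcpos.le hge
    linarith
  set t : ℝ := -μ h with hts
  have ht : 0 < t := by rw [hts]; linarith
  have htne : t ≠ 0 := ne_of_gt ht
  -- sl2 triple
  have hlieh_e : ⁅h, θ X⁆ = t • θ X := by
    rw [hθX h hha]; simp [hts]
  have hlieh_f : ⁅h, X⁆ = (-t) • X := by
    rw [hX h hha, hts, neg_neg]
  have hννh : 0 ≤ ν h := by
    have hH'0 : ((2 / t) • h : g) ≠ 0 := smul_ne_zero (div_ne_zero two_ne_zero htne) hh0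
    have hEF : ⁅θ X, (-(2 / t)) • X⁆ = (2 / t) • h := by
      rw [lie_smul, ← lie_skew, ← hh]
      module
    have hHE : ⁅(2 / t) • h, θ X⁆ = (2 : ℝ) • θ X := by
      rw [smul_lie, hlieh_e, smul_smul, div_mul_cancel₀]
      exact htne
    have hHF : ⁅(2 / t) • h, (-(2 / t)) • X⁆ = -((2 : ℝ) • ((-(2 / t)) • X)) := by
      rw [smul_lie, lie_smul, hlieh_f, smul_smul, smul_smul, ← neg_smul, smul_smul]
      congr 1
      field_simp
    have hHZ : ⁅(2 / t) • h, Z⁆ = (2 / t * ν h) • Z := by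
      rw [smul_lie, hZ h hha, smul_smul]
    have hsl := sl2_nonneg hH'0 hEF hHE hHF hHZ hkill hZ0
    have h3 : 0 < 2 / t := div_pos two_pos ht
    by_contra hlt
    push_neg at hlt
    have := mul_neg_of_pos_of_neg h3 hlt
    linarith
  refine ⟨c⁻¹ • h, a.smul_mem _ hha, ?_, ?_⟩
  · intro H hH
    rw [map_smul]
    simp only [LinearMap.smul_apply, smul_eq_mul]
    rw [hKh H hH]
    field_simp
  · rw [map_smul, smul_eq_mul]
    exact mul_nonneg (inv_nonneg.mpr hcpos.le) hννh

end Aux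

/-- In a real semisimple Lie algebra with Cartan involution `θ`
(so that `B_θ(x, y) = -B(x, θ y)` is positive definite), maximal abelian
subspace `a` of `p`, and restricted root space decomposition, one has
`[g_α, g_λ] = g_{α+λ}` whenever `α`, `λ` and `α + λ` are all restricted roots:
the span of the brackets `[X, Y]`, `X ∈ g_α`, `Y ∈ g_λ`, is all of `g_{α+λ}`. -/
theorem stmt0 {g : Type*} [LieRing g] [LieAlgebra ℝ g] [FiniteDimensional ℝ g]
    [LieAlgebra.IsSemisimple ℝ g]
    (θ : g →ₗ⁅ℝ⁆ g) (hθ2 : ∀ x, θ (θ x) = x)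
    (hθpos : ∀ x : g, x ≠ 0 → 0 < -(killingForm ℝ g x (θ x)))
    (a : Submodule ℝ g)
    (haθ : ∀ H ∈ a, θ H = -H)
    (haab : ∀ H ∈ a, ∀ H' ∈ a, ⁅H, H'⁆ = (0 : g))
    (hamax : ∀ x : g, θ x = -x → (∀ H ∈ a, ⁅H, x⁆ = (0 : g)) → x ∈ a)
    (α lam : g →ₗ[ℝ] ℝ)
    (hα : (∃ H ∈ a, α H ≠ 0) ∧ rootSpaceIn a α ≠ ⊥)
    (hlam : (∃ H ∈ a, lam H ≠ 0) ∧ rootSpaceIn a lam ≠ ⊥)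
    (hsum : (∃ H ∈ a, (α + lam) H ≠ 0) ∧ rootSpaceIn a (α + lam) ≠ ⊥) :
    Submodule.span ℝ
        {z : g | ∃ x ∈ rootSpaceIn a α, ∃ y ∈ rootSpaceIn a lam, z = ⁅x, y⁆}
      = rootSpaceIn a (α + lam) := by
  classical
  set K := killingForm ℝ g with hKdef
  set S := Submodule.span ℝ
      {z : g | ∃ x ∈ rootSpaceIn a α, ∃ y ∈ rootSpaceIn a lam, z = ⁅x, y⁆} with hS
  set V := rootSpaceIn a (α + lam) with hV
  have hSV : S ≤ V := by
    rw [hS, Submodule.span_le]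
    rintro z ⟨x, hx, y, hy, rfl⟩
    exact rootSpaceIn_bracket hx hy
  by_contra hne
  have hlt : S < V := lt_of_le_of_ne hSV hne
  -- find 0 ≠ Z ∈ V orthogonal (w.r.t. Bθ) to S
  have hfind : ∃ Zg : g, Zg ∈ V ∧ Zg ≠ 0 ∧ ∀ s ∈ S, K s (θ Zg) = 0 := by
    set φ : V →ₗ[ℝ] (S →ₗ[ℝ] ℝ) :=
      ((LinearMap.domRestrict' (M₂ := ℝ) S) ∘ₗ K.flip ∘ₗ θ.toLinearMap).domRestrict V with hφ
    have hker : LinearMap.ker φ ≠ ⊥ := by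
      intro hbot
      have h1 := LinearMap.finrank_range_add_finrank_ker φ
      rw [hbot, finrank_bot, add_zero] at h1
      have h2 : Module.finrank ℝ (LinearMap.range φ) ≤ Module.finrank ℝ (Module.Dual ℝ S) :=
        Submodule.finrank_le _
      have h3 : Module.finrank ℝ (Module.Dual ℝ S) = Module.finrank ℝ S :=
        Subspace.dual_finrank_eq
      have h4 : Module.finrank ℝ S < Module.finrank ℝ V :=
        Submodule.finrank_lt_finrank_of_lt hlt
      omega
    obtain ⟨Z, hZker, hZ0⟩ := Submodule.exists_mem_ne_zero_of_ne_bot hker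
    refine ⟨(Z : g), Z.2, ?_, ?_⟩
    · intro h0
      exact hZ0 (Subtype.ext h0)
    · intro s hs
      have := LinearMap.congr_fun hZker ⟨s, hs⟩
      simpa [hφ, LinearMap.domRestrict'] using this
  obtain ⟨Zg, hZV, hZ0, horth⟩ := hfind
  -- Step C, part 1: Zg is killed by θ(g_α)
  have hkill1 : ∀ X ∈ rootSpaceIn a α, ⁅θ X, Zg⁆ = 0 := by
    intro X hXα
    set W : g := ⁅θ X, Zg⁆ with hW
    have hθXm : θ X ∈ rootSpaceIn a (-α) := theta_rootSpaceIn θ hθ2 haθ hXα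
    have hWlam : W ∈ rootSpaceIn a lam := by
      have := rootSpaceIn_bracket hθXm hZV
      rwa [neg_add_cancel_left α lam] at this
    have hXWS : ⁅X, W⁆ ∈ S := by
      apply Submodule.subset_span
      exact ⟨X, hXα, W, hWlam, rfl⟩
    have h0 : K ⁅X, W⁆ (θ Zg) = 0 := horth _ hXWS
    have hθW : θ W = ⁅X, θ Zg⁆ := by
      rw [hW, θ.map_lie, hθ2]
    have hKW : K W (θ W) = 0 := by
      have h1 : K ⁅X, W⁆ (θ Zg) = -(K W ⁅X, θ Zg⁆) :=
        LieModule.traceForm_apply_lie_apply' ℝ g g X W (θ Zg)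
      rw [h1, hθW.symm] at h0
      linarith [h0]
    by_contra hW0
    have := hθpos W hW0
    rw [hKW] at this
    simp at this
  -- Step C, part 2: Zg is killed by θ(g_lam)
  have hkill2 : ∀ Y ∈ rootSpaceIn a lam, ⁅θ Y, Zg⁆ = 0 := by
    intro Y hYlam
    set W : g := ⁅θ Y, Zg⁆ with hW
    have hθYm : θ Y ∈ rootSpaceIn a (-lam) := theta_rootSpaceIn θ hθ2 haθ hYlam
    have hWα : W ∈ rootSpaceIn a α := by
      have := rootSpaceIn_bracket hθYm hZV
      have he : -lam + (α + lam) = α := by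
        rw [add_comm α lam, neg_add_cancel_left]
      rwa [he] at this
    have hWYS : ⁅W, Y⁆ ∈ S := by
      apply Submodule.subset_span
      exact ⟨W, hWα, Y, hYlam, rfl⟩
    have h0 : K ⁅W, Y⁆ (θ Zg) = 0 := horth _ hWYS
    have hθW : θ W = ⁅Y, θ Zg⁆ := by
      rw [hW, θ.map_lie, hθ2]
    have hKW : K W (θ W) = 0 := by
      have h1 : K ⁅W, Y⁆ (θ Zg) = K W ⁅Y, θ Zg⁆ :=
        LieModule.traceForm_apply_lie_apply ℝ g g W Y (θ Zg)
      rw [h1, ← hθW] at h0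
      exact h0
    by_contra hW0
    have := hθpos W hW0
    rw [hKW] at this
    simp at this
  -- get nonzero root vectors
  obtain ⟨X₀, hX₀mem, hX₀0⟩ := Submodule.exists_mem_ne_zero_of_ne_bot hα.2
  obtain ⟨Y₀, hY₀mem, hY₀0⟩ := Submodule.exists_mem_ne_zero_of_ne_bot hlam.2
  obtain ⟨p₁, hp₁a, hKp₁, hνp₁⟩ :=
    keyIneq θ hθ2 hθpos a haθ hamax α (α + lam) hα.1 hX₀mem hX₀0 hZV hZ0
      (hkill1 X₀ hX₀mem)
  obtain ⟨p₂, hp₂a, hKp₂, hνp₂⟩ :=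
    keyIneq θ hθ2 hθpos a haθ hamax lam (α + lam) hlam.1 hY₀mem hY₀0 hZV hZ0
      (hkill2 Y₀ hY₀mem)
  set P : g := p₁ + p₂ with hP
  have hPa : P ∈ a := a.add_mem hp₁a hp₂a
  have hKP : ∀ H ∈ a, K P H = -((α + lam) H) := by
    intro H hH
    rw [hP, map_add, LinearMap.add_apply, hKp₁ H hH, hKp₂ H hH]
    simp only [LinearMap.add_apply]
    ring
  have hνP : 0 ≤ (α + lam) P := by
    rw [hP, map_add]
    exact add_nonneg hνp₁ hνp₂
  by_cases hP0 : P = 0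
  · obtain ⟨H₀, hH₀, hm⟩ := hsum.1
    apply hm
    have := hKP H₀ hH₀
    rw [hP0, map_zero] at this
    simp only [LinearMap.zero_apply] at this
    linarith
  · have h1 := hθpos P hP0
    rw [haθ P hPa, map_neg, neg_neg] at h1
    have h2 := hKP P hPa
    rw [h2] at h1
    linarith
end

section
/- Let α, λ be distinct positive restricted roots such that λ − α is not a root. Then for any X_α ∈ g_α and X_λ ∈ g_λ, one has [[X_α, X_λ], θX_α] = −|α|² A_{α,λ} ⟨X_α, X_α⟩ X_λ, where A_{α,λ} = 2⟨α,λ⟩/|α|² is the Cartan integer. -/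
/-- The metric inner product on `n`: one half of the inner product
`⟨x, y⟩_{B_θ} = -B(x, θ y)`. -/
noncomputable def mI {g : Type*} [LieRing g] [LieAlgebra ℝ g]
    (θ : g →ₗ⁅ℝ⁆ g) (x y : g) : ℝ :=
  (1 / 2) * (-(killingForm ℝ g x (θ y)))

/-- The Cartan integer `A_{α,λ} = 2⟨α,λ⟩/|α|²`, expressed through the vectors
`H_α`, `H_λ` (on `a` the `B_θ` inner product coincides with the Killing form`). -/
noncomputable def cartanInt {g : Type*} [LieRing g] [LieAlgebra ℝ g]
    (Ha Hl : g) : ℝ :=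
  2 * killingForm ℝ g Ha Hl / killingForm ℝ g Ha Ha

/-- Let `α, λ` be distinct positive restricted roots such that
`λ - α` is not a root.  Then for any `X_α ∈ g_α` and `X_λ ∈ g_λ`,
`[[X_α, X_λ], θ X_α] = -|α|² A_{α,λ} ⟨X_α, X_α⟩ X_λ`. -/
theorem stmt1 {g : Type*} [LieRing g] [LieAlgebra ℝ g] [FiniteDimensional ℝ g]
    [LieAlgebra.IsSemisimple ℝ g]
    (θ : g →ₗ⁅ℝ⁆ g) (hθ2 : ∀ x, θ (θ x) = x)
    (hθpos : ∀ x : g, x ≠ 0 → 0 < -(killingForm ℝ g x (θ x)))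
    (a : Submodule ℝ g)
    (haθ : ∀ H ∈ a, θ H = -H)
    (haab : ∀ H ∈ a, ∀ H' ∈ a, ⁅H, H'⁆ = (0 : g))
    (hamax : ∀ x : g, θ x = -x → (∀ H ∈ a, ⁅H, x⁆ = (0 : g)) → x ∈ a)
    -- the set of positive restricted roots
    (Sp : Finset (g →ₗ[ℝ] ℝ))
    (hroots : ∀ l : g →ₗ[ℝ] ℝ,
      ((∃ H ∈ a, l H ≠ 0) ∧ rootSpaceIn a l ≠ ⊥) ↔ (l ∈ Sp ∨ -l ∈ Sp))
    (α lam : g →ₗ[ℝ] ℝ) (hαSp : α ∈ Sp) (hlamSp : lam ∈ Sp)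
    -- `α` and `λ` are distinct (as restricted roots, i.e. on `a`)
    (hne : ∃ H ∈ a, α H ≠ lam H)
    -- `λ - α` is not a root
    (hnr : lam - α ∉ Sp ∧ α - lam ∉ Sp)
    -- the vectors `H_α`, `H_λ` representing the roots via the Killing form
    (Ha : g) (hHa : Ha ∈ a ∧ ∀ H ∈ a, killingForm ℝ g Ha H = α H)
    (Hl : g) (hHl : Hl ∈ a ∧ ∀ H ∈ a, killingForm ℝ g Hl H = lam H)
    (Xa : g) (hXa : Xa ∈ rootSpaceIn a α)
    (Xl : g) (hXl : Xl ∈ rootSpaceIn a lam) :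
    ⁅⁅Xa, Xl⁆, θ Xa⁆
      = (-(killingForm ℝ g Ha Ha * cartanInt Ha Hl * mI θ Xa Xa)) • Xl := by
  obtain ⟨hHam, hHae⟩ := hHa
  obtain ⟨hHlm, hHle⟩ := hHl
  have hsymm : ∀ x y : g, killingForm ℝ g x y = killingForm ℝ g y x :=
    fun x y => LieModule.traceForm_comm ℝ g g x y
  have hinv : ∀ x y z : g, killingForm ℝ g ⁅x, y⁆ z = killingForm ℝ g x ⁅y, z⁆ :=
    fun x y z => LieModule.traceForm_apply_lie_apply ℝ g g x y z
  have hXa' : ∀ H ∈ a, ⁅H, Xa⁆ = α H • Xa := hXa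
  have hXl' : ∀ H ∈ a, ⁅H, Xl⁆ = lam H • Xl := hXl
  -- θ Xa lies in the root space of -α
  have hθXa : ∀ H ∈ a, ⁅H, θ Xa⁆ = -(α H) • θ Xa := by
    intro H hH
    have : ⁅H, θ Xa⁆ = θ ⁅θ H, Xa⁆ := by rw [LieHom.map_lie, hθ2]
    rw [this, haθ H hH, neg_lie, hXa' H hH, map_neg, map_smul, neg_smul]
  -- [Xl, θ Xa] = 0 since λ - α is not a root
  have hbot : rootSpaceIn a (lam - α) = ⊥ := by
    by_contra h
    obtain ⟨H0, hH0, hne0⟩ := hne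
    have hmem : (∃ H ∈ a, (lam - α) H ≠ 0) ∧ rootSpaceIn a (lam - α) ≠ ⊥ := by
      refine ⟨⟨H0, hH0, ?_⟩, h⟩
      simp only [LinearMap.sub_apply]
      exact sub_ne_zero.mpr (Ne.symm hne0)
    rcases (hroots (lam - α)).mp hmem with h1 | h1
    · exact hnr.1 h1
    · rw [neg_sub] at h1; exact hnr.2 h1
  have key0 : ⁅Xl, θ Xa⁆ = 0 := by
    have hmem : ⁅Xl, θ Xa⁆ ∈ rootSpaceIn a (lam - α) := by
      intro H hH
      have : ⁅H, ⁅Xl, θ Xa⁆⁆ = ⁅⁅H, Xl⁆, θ Xa⁆ + ⁅Xl, ⁅H, θ Xa⁆⁆ := leibniz_lie H Xl (θ Xa)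
      rw [this, hXl' H hH, hθXa H hH, smul_lie, lie_smul, LinearMap.sub_apply, sub_smul,
        neg_smul, sub_eq_add_neg]
    rw [hbot] at hmem
    exact hmem
  -- Z = [Xa, θ Xa] ∈ a
  set c : ℝ := killingForm ℝ g Xa (θ Xa) with hc
  have hθZ : θ ⁅Xa, θ Xa⁆ = -⁅Xa, θ Xa⁆ := by
    rw [LieHom.map_lie, hθ2, ← lie_skew]
  have hZcomm : ∀ H ∈ a, ⁅H, ⁅Xa, θ Xa⁆⁆ = 0 := by
    intro H hH
    rw [leibniz_lie, hXa' H hH, hθXa H hH, smul_lie, lie_smul, neg_smul, add_neg_cancel]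
  have hZa : ⁅Xa, θ Xa⁆ ∈ a := hamax _ hθZ hZcomm
  -- Z = c • Ha
  have hZeq : ⁅Xa, θ Xa⁆ = c • Ha := by
    set W : g := ⁅Xa, θ Xa⁆ - c • Ha with hW
    have hWa : W ∈ a := Submodule.sub_mem a hZa (Submodule.smul_mem a c hHam)
    have hWorth : ∀ H ∈ a, killingForm ℝ g H W = 0 := by
      intro H hH
      have h1 : killingForm ℝ g H ⁅Xa, θ Xa⁆ = α H * c := by
        rw [← hinv, hXa' H hH, map_smul, LinearMap.smul_apply, smul_eq_mul]
      have h2 : killingForm ℝ g H (c • Ha) = c * α H := by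
        rw [map_smul, smul_eq_mul, hsymm H Ha, hHae H hH]
      rw [hW, map_sub, h1, h2, mul_comm, sub_self]
    have hW0 : W = 0 := by
      by_contra h
      have hpos := hθpos W h
      rw [haθ W hWa] at hpos
      have := hWorth W hWa
      simp only [map_neg, neg_neg] at hpos
      rw [this] at hpos
      exact lt_irrefl 0 hpos
    have := sub_eq_zero.mp hW0
    exact this
  -- |α|² > 0
  have hHane : killingForm ℝ g Ha Ha ≠ 0 := by
    obtain ⟨⟨H1, hH1, hα1⟩, _⟩ := (hroots α).mpr (Or.inl hαSp)
    have hHa0 : Ha ≠ 0 := by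
      intro h
      apply hα1
      rw [← hHae H1 hH1, h, map_zero, LinearMap.zero_apply]
    have := hθpos Ha hHa0
    rw [haθ Ha hHam] at this
    simp only [map_neg, neg_neg] at this
    exact ne_of_gt this
  -- main computation
  have hmain : ⁅⁅Xa, Xl⁆, θ Xa⁆ = (c * killingForm ℝ g Ha Hl) • Xl := by
    have hleib : ⁅Xa, ⁅Xl, θ Xa⁆⁆ = ⁅⁅Xa, Xl⁆, θ Xa⁆ + ⁅Xl, ⁅Xa, θ Xa⁆⁆ :=
      leibniz_lie Xa Xl (θ Xa)
    rw [key0, lie_zero] at hleib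
    have h1 : ⁅Xl, ⁅Xa, θ Xa⁆⁆ = -((c * killingForm ℝ g Ha Hl) • Xl) := by
      rw [hZeq, lie_smul, ← lie_skew, hXl' Ha hHam, smul_neg, smul_smul,
        ← hHle Ha hHam, hsymm Hl Ha]
    have h2 : ⁅⁅Xa, Xl⁆, θ Xa⁆ = -⁅Xl, ⁅Xa, θ Xa⁆⁆ :=
      eq_neg_of_add_eq_zero_left hleib.symm
    rw [h2, h1, neg_neg]
  rw [hmain]
  congr 1
  rw [cartanInt, mI, hc]
  field_simp
end

section
/- Let α, λ be distinct positive restricted roots such that λ − α is not a root. Then for any X_α ∈ g_α and X_λ, Y_λ ∈ g_λ, one has ⟨[X_α, X_λ], [X_α, Y_λ]⟩ = −|α|² A_{α,λ} ⟨X_α, X_α⟩ ⟨X_λ, Y_λ⟩, where ⟨·,·⟩ is the left-invariant inner product on a ⊕ n. In particular, if A_{α,λ} < 0 and X_α, X_λ are nonzero, then [X_α, X_λ] ≠ 0. -/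
/-- Let `α, λ` be distinct positive restricted roots with
`λ - α` not a root.  Then for `X_α ∈ g_α` and `X_λ, Y_λ ∈ g_λ`,
`⟨[X_α, X_λ], [X_α, Y_λ]⟩ = -|α|² A_{α,λ} ⟨X_α, X_α⟩ ⟨X_λ, Y_λ⟩` for the metric
inner product `⟨·,·⟩` on `a ⊕ n`; in particular if `A_{α,λ} < 0` and
`X_α, X_λ ≠ 0` then `[X_α, X_λ] ≠ 0`. -/
theorem stmt2 {g : Type*} [LieRing g] [LieAlgebra ℝ g] [FiniteDimensional ℝ g]
    [LieAlgebra.IsSemisimple ℝ g]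
    (θ : g →ₗ⁅ℝ⁆ g) (hθ2 : ∀ x, θ (θ x) = x)
    (hθpos : ∀ x : g, x ≠ 0 → 0 < -(killingForm ℝ g x (θ x)))
    (a : Submodule ℝ g)
    (haθ : ∀ H ∈ a, θ H = -H)
    (haab : ∀ H ∈ a, ∀ H' ∈ a, ⁅H, H'⁆ = (0 : g))
    (hamax : ∀ x : g, θ x = -x → (∀ H ∈ a, ⁅H, x⁆ = (0 : g)) → x ∈ a)
    -- the set of positive restricted roots
    (Sp : Finset (g →ₗ[ℝ] ℝ))
    (hroots : ∀ l : g →ₗ[ℝ] ℝ,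
      ((∃ H ∈ a, l H ≠ 0) ∧ rootSpaceIn a l ≠ ⊥) ↔ (l ∈ Sp ∨ -l ∈ Sp))
    (α lam : g →ₗ[ℝ] ℝ) (hαSp : α ∈ Sp) (hlamSp : lam ∈ Sp)
    -- `α` and `λ` are distinct (as restricted roots, i.e. on `a`)
    (hne : ∃ H ∈ a, α H ≠ lam H)
    -- `λ - α` is not a root
    (hnr : lam - α ∉ Sp ∧ α - lam ∉ Sp)
    -- the vectors `H_α`, `H_λ` representing the roots via the Killing form
    (Ha : g) (hHa : Ha ∈ a ∧ ∀ H ∈ a, killingForm ℝ g Ha H = α H)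
    (Hl : g) (hHl : Hl ∈ a ∧ ∀ H ∈ a, killingForm ℝ g Hl H = lam H)
    (Xa : g) (hXa : Xa ∈ rootSpaceIn a α)
    (Xl : g) (hXl : Xl ∈ rootSpaceIn a lam)
    (Yl : g) (hYl : Yl ∈ rootSpaceIn a lam) :
    mI θ ⁅Xa, Xl⁆ ⁅Xa, Yl⁆
        = -(killingForm ℝ g Ha Ha * cartanInt Ha Hl * mI θ Xa Xa * mI θ Xl Yl)
      ∧ (cartanInt Ha Hl < 0 → Xa ≠ 0 → Xl ≠ 0 → ⁅Xa, Xl⁆ ≠ 0) := by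
  classical
  set B := killingForm ℝ g with hBdef
  have hBsymm : ∀ x y : g, B x y = B y x := fun x y => LieModule.traceForm_comm ℝ g g x y
  have hBinv : ∀ x y z : g, B ⁅x, y⁆ z = B x ⁅y, z⁆ :=
    fun x y z => LieModule.traceForm_apply_lie_apply ℝ g g x y z
  have hXa' : ∀ H ∈ a, ⁅H, Xa⁆ = α H • Xa := hXa
  have hXl' : ∀ H ∈ a, ⁅H, Xl⁆ = lam H • Xl := hXl
  -- action on θ of a root vector
  have hθroot : ∀ (l : g →ₗ[ℝ] ℝ) (X : g), (∀ H ∈ a, ⁅H, X⁆ = l H • X) →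
      ∀ H ∈ a, ⁅H, θ X⁆ = -(l H) • θ X := by
    intro l X hX H hH
    have h1 : ⁅H, θ X⁆ = θ ⁅θ H, X⁆ := by
      rw [LieHom.map_lie, hθ2 H]
    rw [h1, haθ H hH, neg_lie, hX H hH, ← neg_smul, map_smul]
  -- positive definiteness of B on a
  have hposa : ∀ H ∈ a, H ≠ 0 → 0 < B H H := by
    intro H hH h0
    have := hθpos H h0
    rw [haθ H hH] at this
    simpa using this
  have hαne : ∃ H ∈ a, α H ≠ 0 := ((hroots α).mpr (Or.inl hαSp)).1
  have hHa0 : Ha ≠ 0 := by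
    obtain ⟨H, hH, hαH⟩ := hαne
    intro h
    apply hαH
    rw [← hHa.2 H hH, h]
    simp
  have hBaa : 0 < B Ha Ha := hposa Ha hHa.1 hHa0
  -- ⁅Xa, θ Xa⁆ = (B Xa (θ Xa)) • Ha
  have hZθ : θ ⁅Xa, θ Xa⁆ = -⁅Xa, θ Xa⁆ := by
    rw [LieHom.map_lie, hθ2, ← lie_skew]
  have hZcomm : ∀ H ∈ a, ⁅H, ⁅Xa, θ Xa⁆⁆ = 0 := by
    intro H hH
    rw [leibniz_lie, hXa' H hH, hθroot α Xa hXa' H hH, smul_lie, lie_smul]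
    module
  have hZa : ⁅Xa, θ Xa⁆ ∈ a := hamax _ hZθ hZcomm
  have hZB : ∀ H ∈ a, B ⁅Xa, θ Xa⁆ H = B Xa (θ Xa) * α H := by
    intro H hH
    rw [hBinv, ← lie_skew (θ Xa) H, hθroot α Xa hXa' H hH]
    simp only [map_neg, map_smul, smul_eq_mul, neg_smul, neg_neg]
    ring
  have hZeq : ⁅Xa, θ Xa⁆ = (B Xa (θ Xa)) • Ha := by
    have hWa : ⁅Xa, θ Xa⁆ - (B Xa (θ Xa)) • Ha ∈ a :=
      Submodule.sub_mem a hZa (Submodule.smul_mem a _ hHa.1)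
    by_contra hW
    have hW0 : ⁅Xa, θ Xa⁆ - (B Xa (θ Xa)) • Ha ≠ 0 := sub_ne_zero.mpr hW
    have hpos := hposa _ hWa hW0
    have hzero : ∀ H ∈ a, B (⁅Xa, θ Xa⁆ - (B Xa (θ Xa)) • Ha) H = 0 := by
      intro H hH
      have h2 : B (⁅Xa, θ Xa⁆ - (B Xa (θ Xa)) • Ha) H
          = B ⁅Xa, θ Xa⁆ H - B Xa (θ Xa) * B Ha H := by
        simp [map_sub, LinearMap.sub_apply]
      rw [h2, hZB H hH, hHa.2 H hH]
      ring
    rw [hzero _ hWa] at hpos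
    exact lt_irrefl 0 hpos
  -- ⁅Xa, θ Y⁆ = 0 for Y in the λ root space
  have hbot : rootSpaceIn a (α - lam) = ⊥ := by
    by_contra hb
    have hex : ∃ H ∈ a, (α - lam) H ≠ 0 := by
      obtain ⟨H, hH, hne'⟩ := hne
      exact ⟨H, hH, by simpa [LinearMap.sub_apply] using sub_ne_zero.mpr hne'⟩
    rcases (hroots (α - lam)).mp ⟨hex, hb⟩ with h | h
    · exact hnr.2 h
    · rw [neg_sub] at h
      exact hnr.1 h
  have hcross : ∀ Y : g, (∀ H ∈ a, ⁅H, Y⁆ = lam H • Y) → ⁅Xa, θ Y⁆ = 0 := by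
    intro Y hY
    have hmem : ⁅Xa, θ Y⁆ ∈ rootSpaceIn a (α - lam) := by
      intro H hH
      rw [leibniz_lie, hXa' H hH, hθroot lam Y hY H hH, smul_lie, lie_smul]
      simp only [LinearMap.sub_apply]
      module
    rw [hbot] at hmem
    simpa using hmem
  have hlamHa : lam Ha = B Ha Hl := by
    rw [← hHl.2 Ha hHa.1, hBsymm]
  -- the key identity, for arbitrary Y in the λ root space
  have key : ∀ Y : g, Y ∈ rootSpaceIn a lam →
      mI θ ⁅Xa, Xl⁆ ⁅Xa, Y⁆
        = -(B Ha Ha * cartanInt Ha Hl * mI θ Xa Xa * mI θ Xl Y) := by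
    intro Y hY
    have hY' : ∀ H ∈ a, ⁅H, Y⁆ = lam H • Y := hY
    have step1 : ⁅Xa, ⁅θ Xa, θ Y⁆⁆ = -(B Xa (θ Xa) * B Ha Hl) • θ Y := by
      rw [leibniz_lie, hcross Y hY', lie_zero, add_zero, hZeq, smul_lie,
        hθroot lam Y hY' Ha hHa.1, hlamHa]
      module
    have step2 : B ⁅Xa, Xl⁆ (θ ⁅Xa, Y⁆) = B Xa (θ Xa) * B Ha Hl * B Xl (θ Y) := by
      rw [LieHom.map_lie, ← lie_skew Xa Xl, map_neg, LinearMap.neg_apply, hBinv, step1]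
      simp only [map_neg, map_smul, smul_eq_mul, neg_smul, neg_neg]
    simp only [mI, cartanInt]
    rw [← hBdef, step2]
    field_simp
  refine ⟨key Yl hYl, ?_⟩
  intro hA hXa0 hXl0 hbr
  have h1 := key Xl hXl
  rw [hbr] at h1
  have h0 : mI θ (0 : g) (0 : g) = 0 := by simp [mI]
  rw [h0] at h1
  have hm1 : 0 < mI θ Xa Xa := by
    simp only [mI]
    rw [← hBdef]
    linarith [hθpos Xa hXa0]
  have hm2 : 0 < mI θ Xl Xl := by
    simp only [mI]
    rw [← hBdef]
    linarith [hθpos Xl hXl0]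
  nlinarith [mul_pos (mul_pos (mul_pos hBaa (neg_pos.mpr hA)) hm1) hm2]
end

section
/- Let α, λ ∈ Σ⁺ be distinct positive restricted roots with λ − α not a root, and let X_α ∈ g_α, X_λ ∈ g_λ. Then [[X_α, X_λ], θX_λ] = |α|² A_{α,λ} ⟨X_λ, X_λ⟩ X_α, where ⟨·,·⟩ is the metric inner product on n (equal to half the B_θ inner product). -/
/-- Let `α, λ` be distinct positive restricted roots such that
`λ - α` is not a root.  Then for any `X_α ∈ g_α` and `X_λ ∈ g_λ`,
`[[X_α, X_λ], θ X_λ] = |α|² A_{α,λ} ⟨X_λ, X_λ⟩ X_α`, where `⟨·,·⟩` is the metric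
inner product on `n` (half of the `B_θ` inner product). -/
theorem stmt19 {g : Type*} [LieRing g] [LieAlgebra ℝ g] [FiniteDimensional ℝ g]
    [LieAlgebra.IsSemisimple ℝ g]
    (θ : g →ₗ⁅ℝ⁆ g) (hθ2 : ∀ x, θ (θ x) = x)
    (hθpos : ∀ x : g, x ≠ 0 → 0 < -(killingForm ℝ g x (θ x)))
    (a : Submodule ℝ g)
    (haθ : ∀ H ∈ a, θ H = -H)
    (haab : ∀ H ∈ a, ∀ H' ∈ a, ⁅H, H'⁆ = (0 : g))
    (hamax : ∀ x : g, θ x = -x → (∀ H ∈ a, ⁅H, x⁆ = (0 : g)) → x ∈ a)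
    -- the set of positive restricted roots
    (Sp : Finset (g →ₗ[ℝ] ℝ))
    (hroots : ∀ l : g →ₗ[ℝ] ℝ,
      ((∃ H ∈ a, l H ≠ 0) ∧ rootSpaceIn a l ≠ ⊥) ↔ (l ∈ Sp ∨ -l ∈ Sp))
    (α lam : g →ₗ[ℝ] ℝ) (hαSp : α ∈ Sp) (hlamSp : lam ∈ Sp)
    -- `α` and `λ` are distinct (as restricted roots, i.e. on `a`)
    (hne : ∃ H ∈ a, α H ≠ lam H)
    -- `λ - α` is not a root
    (hnr : lam - α ∉ Sp ∧ α - lam ∉ Sp)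
    -- the vectors `H_α`, `H_λ` representing the roots via the Killing form
    (Ha : g) (hHa : Ha ∈ a ∧ ∀ H ∈ a, killingForm ℝ g Ha H = α H)
    (Hl : g) (hHl : Hl ∈ a ∧ ∀ H ∈ a, killingForm ℝ g Hl H = lam H)
    (Xa : g) (hXa : Xa ∈ rootSpaceIn a α)
    (Xl : g) (hXl : Xl ∈ rootSpaceIn a lam) :
    ⁅⁅Xa, Xl⁆, θ Xl⁆
      = (killingForm ℝ g Ha Ha * cartanInt Ha Hl * mI θ Xl Xl) • Xa := by
  set κ := killingForm ℝ g with hκ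
  set c : ℝ := κ Xl (θ Xl) with hc
  -- θ Xl is in the root space of -lam
  have hθXl : ∀ H ∈ a, ⁅H, θ Xl⁆ = -(lam H) • θ Xl := by
    intro H hH
    have : ⁅H, θ Xl⁆ = θ ⁅θ H, Xl⁆ := by
      rw [LieHom.map_lie, hθ2]
    rw [this, haθ H hH, neg_lie, hXl H hH, map_neg θ, map_smul θ, neg_smul]
  -- [Xa, θ Xl] = 0 since α - lam is not a root
  have hbot : rootSpaceIn a (α - lam) = ⊥ := by
    by_contra hb
    obtain ⟨H, hH, hne'⟩ := hne
    have := (hroots (α - lam)).mp ⟨⟨H, hH, by simpa [sub_eq_zero] using hne'⟩, hb⟩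
    rcases this with h | h
    · exact hnr.2 h
    · rw [neg_sub] at h; exact hnr.1 h
  have hXaθXl : ⁅Xa, θ Xl⁆ = 0 := by
    have hmem : ⁅Xa, θ Xl⁆ ∈ rootSpaceIn a (α - lam) := by
      intro H hH
      rw [leibniz_lie, hXa H hH, hθXl H hH, smul_lie, lie_smul, LinearMap.sub_apply,
        sub_smul, neg_smul, sub_eq_add_neg]
    rw [hbot] at hmem
    simpa using hmem
  -- [Xl, θ Xl] = c • Hl
  have hXlθXl : ⁅Xl, θ Xl⁆ = c • Hl := by
    set Z : g := ⁅Xl, θ Xl⁆ - c • Hl with hZ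
    have hθZ : θ Z = -Z := by
      rw [hZ, map_sub θ, map_smul θ, LieHom.map_lie, haθ Hl hHl.1]
      have : ⁅θ Xl, θ (θ Xl)⁆ = -⁅Xl, θ Xl⁆ := by rw [hθ2, ← lie_skew]
      rw [this, smul_neg]
      abel
    have hZcomm : ∀ H ∈ a, ⁅H, Z⁆ = 0 := by
      intro H hH
      rw [hZ, lie_sub, lie_smul, leibniz_lie, hXl H hH, hθXl H hH, smul_lie, lie_smul,
        haab H hH Hl hHl.1, smul_zero, sub_zero]
      module
    have hZa : Z ∈ a := hamax Z hθZ hZcomm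
    have hZXl : ⁅Z, Xl⁆ = lam Z • Xl := hXl Z hZa
    have hκZZ : κ Z Z = 0 := by
      have h1 : κ Z ⁅Xl, θ Xl⁆ = lam Z * c := by
        rw [hκ, ← LieModule.traceForm_apply_lie_apply]
        have : killingForm ℝ g ⁅Z, Xl⁆ (θ Xl) = killingForm ℝ g (lam Z • Xl) (θ Xl) := by
          rw [hZXl]
        rw [this]
        simp [hc, hκ]
      have h2 : κ Z Hl = lam Z := by
        rw [hκ, LieModule.traceForm_comm]
        exact hHl.2 Z hZa
      have expand : ∀ w : g, κ w Z = κ w ⁅Xl, θ Xl⁆ - c * κ w Hl := by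
        intro w; rw [hZ, map_sub, map_smul, smul_eq_mul]
      rw [expand Z, h1, h2]; ring
    by_contra hne0
    have hZ0 : Z ≠ 0 := by
      intro h
      apply hne0
      have := sub_eq_zero.mp (hZ ▸ h)
      rw [this]
    have := hθpos Z hZ0
    rw [hθZ] at this
    simp only [map_neg, LinearMap.neg_apply, neg_neg] at this
    rw [hκZZ] at this
    exact lt_irrefl 0 this
  -- α(Hl) = κ Ha Hl
  have hαHl : α Hl = κ Ha Hl := (hHa.2 Hl hHl.1).symm
  -- κ Ha Ha ≠ 0
  have hHaHa : κ Ha Ha ≠ 0 := by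
    obtain ⟨⟨H, hH, hαH⟩, -⟩ := (hroots α).mpr (Or.inl hαSp)
    have hHa0 : Ha ≠ 0 := by
      intro h
      apply hαH
      rw [← hHa.2 H hH, h]
      simp
    have := hθpos Ha hHa0
    have hθHa : θ Ha = -Ha := haθ Ha hHa.1
    rw [hθHa] at this
    simp only [map_neg, neg_neg] at this
    have : (0:ℝ) < κ Ha Ha := by simpa using this
    exact ne_of_gt this
  -- compute the bracket
  have hLHS : ⁅⁅Xa, Xl⁆, θ Xl⁆ = (-(c * (α Hl))) • Xa := by
    rw [lie_lie, hXaθXl, lie_zero, sub_zero, hXlθXl, lie_smul, ← lie_skew,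
      hXa Hl hHl.1]
    rw [smul_neg, smul_smul, neg_smul]
  rw [hLHS]
  congr 1
  rw [cartanInt, mI, ← hκ, ← hc, hαHl]
  field_simp
end
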